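/- Define h : (1,∞) × ℝ × (0,∞) → ℝ³ by h(r, θ₁, r₁) = (h₁, h₂, h₃), where h₁ = 4π r − (24π/(3√3 + 2π))·K(r), h₂ = (√3/3)·sin θ₁ + (3√3/2)·(2√3·π − 3)·cos θ₁ − (√3/9)·r₁, and h₃ = (9√3/(2r₁))·sin θ₁ − (9π/r₁)·sin θ₁ + (√3/(3r₁))·cos θ₁ − (3/2)·(√3 + 2π/3) + 4π. Then h is differentiable at the point (2, π/2, 3) and the determinant of its Jacobian matrix at (2, π/2, 3) is nonzero; hence (2, π/2, 3) is a simple zero of h. -/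

import Mathlib

open Real

/-- The function `K(r) = π r + (2/r)√(r²−1) − 2r·arctan(√(r²−1))`. -/
noncomputable def K (r : ℝ) : ℝ :=
  π * r + (2 / r) * Real.sqrt (r ^ 2 - 1) - 2 * r * Real.arctan (Real.sqrt (r ^ 2 - 1))

/-- The averaged function `h = (h₁, h₂, h₃)` of the explicit 4-dimensional example,
in the variables `(r, θ₁, r₁)`. -/
noncomputable def h : (Fin 3 → ℝ) → (Fin 3 → ℝ) := fun x =>
  ![4 * π * x 0 - (24 * π / (3 * Real.sqrt 3 + 2 * π)) * K (x 0),
    Real.sqrt 3 / 3 * Real.sin (x 1) +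
      3 * Real.sqrt 3 / 2 * (2 * Real.sqrt 3 * π - 3) * Real.cos (x 1) -
      Real.sqrt 3 / 9 * x 2,
    9 * Real.sqrt 3 / (2 * x 2) * Real.sin (x 1) - 9 * π / x 2 * Real.sin (x 1) +
      Real.sqrt 3 / (3 * x 2) * Real.cos (x 1) -
      3 / 2 * (Real.sqrt 3 + 2 * π / 3) + 4 * π]

section Aux

/-- The point `(2, π/2, 3)`. -/
noncomputable def pt : Fin 3 → ℝ := ![2, π/2, 3]

open ContinuousLinearMap

/-- Row 0 of the Jacobian of `h` at `pt`. -/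
noncomputable def D0 : (Fin 3 → ℝ) →L[ℝ] ℝ := (24*Real.sqrt 3*π/(3*Real.sqrt 3+2*π)) • proj 0
/-- Row 1 of the Jacobian of `h` at `pt`. -/
noncomputable def D1 : (Fin 3 → ℝ) →L[ℝ] ℝ :=
  (9*Real.sqrt 3/2 - 9*π) • proj 1 + (-(Real.sqrt 3/9)) • proj 2
/-- Row 2 of the Jacobian of `h` at `pt`. -/
noncomputable def D2 : (Fin 3 → ℝ) →L[ℝ] ℝ :=
  (-(Real.sqrt 3/9)) • proj 1 + (π - Real.sqrt 3/2) • proj 2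

lemma arctan_sqrt3 : Real.arctan (Real.sqrt 3) = π/3 :=
  Real.arctan_eq_of_tan_eq Real.tan_pi_div_three ⟨by linarith [pi_pos], by linarith [pi_pos]⟩

lemma hasDerivAt_K : HasDerivAt K (π/3 - Real.sqrt 3/2) 2 := by
  have hs : HasDerivAt (fun r : ℝ => Real.sqrt (r ^ 2 - 1))
      (1 / (2 * Real.sqrt ((2:ℝ)^2 - 1)) * (2*2)) 2 := by
    have h1 : HasDerivAt (fun r : ℝ => r ^ 2 - 1) (2*2) 2 := by
      simpa using (hasDerivAt_pow 2 (2:ℝ)).sub_const 1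
    exact (Real.hasDerivAt_sqrt (by norm_num : ((2:ℝ)^2 - 1) ≠ 0)).comp 2 h1
  have hq : HasDerivAt (fun r : ℝ => 2 / r) ((0 * 2 - 2 * 1)/2^2) 2 :=
    (hasDerivAt_const 2 (2:ℝ)).div (hasDerivAt_id 2) (by norm_num)
  have hπr : HasDerivAt (fun r : ℝ => π * r) (π * 1) 2 := (hasDerivAt_id 2).const_mul π
  have h2r : HasDerivAt (fun r : ℝ => 2 * r) (2 * 1) 2 := (hasDerivAt_id 2).const_mul 2
  have harc : HasDerivAt (fun r : ℝ => Real.arctan (Real.sqrt (r ^ 2 - 1)))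
      (1 / (1 + Real.sqrt ((2:ℝ)^2-1) ^ 2) * (1 / (2 * Real.sqrt ((2:ℝ)^2 - 1)) * (2*2))) 2 :=
    by have := (Real.hasDerivAt_arctan (Real.sqrt ((2:ℝ)^2-1))).comp 2 hs; exact this
  have H := (hπr.add (hq.mul hs)).sub (h2r.mul harc)
  convert H using 1
  all_goals (try rfl)
  have h3 : Real.sqrt ((2:ℝ)^2 - 1) = Real.sqrt 3 := by norm_num
  rw [h3] at *
  have hs3 : Real.sqrt 3 ^ 2 = 3 := Real.sq_sqrt (by norm_num)
  have hs0 : (0:ℝ) < Real.sqrt 3 := by positivity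
  rw [arctan_sqrt3]
  field_simp
  nlinarith [hs3, hs0, pi_pos]

lemma sqrt3_pos : (0:ℝ) < Real.sqrt 3 := by positivity
lemma sqrt3_sq : Real.sqrt 3 ^ 2 = 3 := Real.sq_sqrt (by norm_num)

lemma comp0 : HasFDerivAt
    (fun x : Fin 3 → ℝ => 4 * π * x 0 - (24 * π / (3 * Real.sqrt 3 + 2 * π)) * K (x 0))
    D0 pt := by
  have h1 : HasDerivAt (fun r : ℝ => 4 * π * r - (24 * π / (3 * Real.sqrt 3 + 2 * π)) * K r)
      (4 * π * 1 - (24 * π / (3 * Real.sqrt 3 + 2 * π)) * (π/3 - Real.sqrt 3/2)) 2 :=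
    ((hasDerivAt_id 2).const_mul (4*π)).sub (hasDerivAt_K.const_mul _)
  have h2 := h1.comp_hasFDerivAt (𝕜 := ℝ) (f := fun x : Fin 3 → ℝ => x 0) pt
    (hasFDerivAt_apply 0 pt)
  refine h2.congr_fderiv ?_
  unfold D0
  congr 1
  have hden : (0:ℝ) < 3 * Real.sqrt 3 + 2 * π := by positivity
  field_simp
  ring

lemma comp1 : HasFDerivAt
    (fun x : Fin 3 → ℝ => Real.sqrt 3 / 3 * Real.sin (x 1) +
      3 * Real.sqrt 3 / 2 * (2 * Real.sqrt 3 * π - 3) * Real.cos (x 1) -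
      Real.sqrt 3 / 9 * x 2) D1 pt := by
  have e1 : HasFDerivAt (𝕜 := ℝ) (fun x : Fin 3 → ℝ => x 1) (proj 1) pt := hasFDerivAt_apply 1 pt
  have e2 : HasFDerivAt (𝕜 := ℝ) (fun x : Fin 3 → ℝ => x 2) (proj 2) pt := hasFDerivAt_apply 2 pt
  have hsin : HasFDerivAt (fun x : Fin 3 → ℝ => Real.sin (x 1))
      (Real.cos (π/2) • proj (R := ℝ) (φ := fun _ : Fin 3 => ℝ) (1 : Fin 3)) pt :=
    by have := (Real.hasDerivAt_sin (π/2)).comp_hasFDerivAt (𝕜 := ℝ) pt e1; exact this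
  have hcos : HasFDerivAt (fun x : Fin 3 → ℝ => Real.cos (x 1))
      ((-Real.sin (π/2)) • proj (R := ℝ) (φ := fun _ : Fin 3 => ℝ) (1 : Fin 3)) pt :=
    by have := (Real.hasDerivAt_cos (π/2)).comp_hasFDerivAt (𝕜 := ℝ) pt e1; exact this
  have H := ((hsin.const_mul (Real.sqrt 3 / 3)).add
      (hcos.const_mul (3 * Real.sqrt 3 / 2 * (2 * Real.sqrt 3 * π - 3)))).sub
      (e2.const_mul (Real.sqrt 3 / 9))
  refine H.congr_fderiv ?_
  unfold D1
  ext v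
  simp [smul_smul, Real.cos_pi_div_two, Real.sin_pi_div_two, mul_comm]
  linear_combination (-(3*π*v 1)) * sqrt3_sq

lemma comp2 : HasFDerivAt
    (fun x : Fin 3 → ℝ => 9 * Real.sqrt 3 / (2 * x 2) * Real.sin (x 1) -
      9 * π / x 2 * Real.sin (x 1) + Real.sqrt 3 / (3 * x 2) * Real.cos (x 1) -
      3 / 2 * (Real.sqrt 3 + 2 * π / 3) + 4 * π) D2 pt := by
  have e1 : HasFDerivAt (𝕜 := ℝ) (fun x : Fin 3 → ℝ => x 1) (proj 1) pt := hasFDerivAt_apply 1 pt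
  have e2 : HasFDerivAt (𝕜 := ℝ) (fun x : Fin 3 → ℝ => x 2) (proj 2) pt := hasFDerivAt_apply 2 pt
  have hsin : HasFDerivAt (fun x : Fin 3 → ℝ => Real.sin (x 1))
      (Real.cos (π/2) • proj (R := ℝ) (φ := fun _ : Fin 3 => ℝ) (1 : Fin 3)) pt :=
    by have := (Real.hasDerivAt_sin (π/2)).comp_hasFDerivAt (𝕜 := ℝ) pt e1; exact this
  have hcos : HasFDerivAt (fun x : Fin 3 → ℝ => Real.cos (x 1))
      ((-Real.sin (π/2)) • proj (R := ℝ) (φ := fun _ : Fin 3 => ℝ) (1 : Fin 3)) pt :=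
    by have := (Real.hasDerivAt_cos (π/2)).comp_hasFDerivAt (𝕜 := ℝ) pt e1; exact this
  have d1 : HasDerivAt (fun r : ℝ => 9 * Real.sqrt 3 / (2 * r))
      ((0 * (2*3) - 9 * Real.sqrt 3 * (2*1)) / (2*3)^2) 3 :=
    (hasDerivAt_const 3 (9 * Real.sqrt 3)).div ((hasDerivAt_id 3).const_mul 2) (by norm_num)
  have d2 : HasDerivAt (fun r : ℝ => 9 * π / r) ((0 * 3 - 9 * π * 1) / 3^2) 3 :=
    (hasDerivAt_const 3 (9 * π)).div (hasDerivAt_id 3) (by norm_num)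
  have d3 : HasDerivAt (fun r : ℝ => Real.sqrt 3 / (3 * r))
      ((0 * (3*3) - Real.sqrt 3 * (3*1)) / (3*3)^2) 3 :=
    (hasDerivAt_const 3 (Real.sqrt 3)).div ((hasDerivAt_id 3).const_mul 3) (by norm_num)
  have u1 := d1.comp_hasFDerivAt (𝕜 := ℝ) pt e2
  have u2 := d2.comp_hasFDerivAt (𝕜 := ℝ) pt e2
  have u3 := d3.comp_hasFDerivAt (𝕜 := ℝ) pt e2
  have H := ((((u1.mul hsin).sub (u2.mul hsin)).add (u3.mul hcos)).sub_const
      (3 / 2 * (Real.sqrt 3 + 2 * π / 3))).add_const (4 * π)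
  refine H.congr_fderiv ?_
  unfold D2
  ext v
  simp [pt, smul_smul, Real.cos_pi_div_two, Real.sin_pi_div_two]
  ring_nf

lemma hasFDerivAt_h : HasFDerivAt h (ContinuousLinearMap.pi ![D0, D1, D2]) pt := by
  rw [hasFDerivAt_pi']
  intro i
  fin_cases i <;>
    simp only [ContinuousLinearMap.proj_pi, Matrix.cons_val_zero, Matrix.cons_val_one,
      Matrix.head_cons, Matrix.cons_val_two, Matrix.tail_cons, h, Fin.zero_eta, Fin.mk_one]
  · exact comp0
  · exact comp1
  · exact comp2

end Aux

theorem simple_zero :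
    DifferentiableAt ℝ h ![2, π / 2, 3] ∧
    LinearMap.det (fderiv ℝ h ![2, π / 2, 3]).toLinearMap ≠ 0 := by
  have hL : HasFDerivAt h (ContinuousLinearMap.pi ![D0, D1, D2]) ![2, π / 2, 3] := hasFDerivAt_h
  refine ⟨hL.differentiableAt, ?_⟩
  rw [hL.fderiv, ← LinearMap.det_toMatrix', Matrix.det_fin_three]
  simp [LinearMap.toMatrix'_apply, D0, D1, D2, ContinuousLinearMap.pi_apply,
    ContinuousLinearMap.proj_apply, smul_eq_mul]
  have hs := sqrt3_sq
  have hs0 := sqrt3_pos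
  have hp := pi_gt_three
  have hc : 0 < 24 * Real.sqrt 3 * π / (3 * Real.sqrt 3 + 2 * π) := by positivity
  have hsl : Real.sqrt 3 < 2 := by nlinarith
  have hB : (9 * Real.sqrt 3 / 2 - 9 * π) * (π - Real.sqrt 3 / 2) -
      Real.sqrt 3 / 9 * (Real.sqrt 3 / 9) < 0 := by nlinarith
  apply ne_of_lt
  have hE : 24 * Real.sqrt 3 * π / (3 * Real.sqrt 3 + 2 * π) * (9 * Real.sqrt 3 / 2 - 9 * π) *
        (π - Real.sqrt 3 / 2) -
        24 * Real.sqrt 3 * π / (3 * Real.sqrt 3 + 2 * π) * (Real.sqrt 3 / 9) * (Real.sqrt 3 / 9) =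
      24 * Real.sqrt 3 * π / (3 * Real.sqrt 3 + 2 * π) *
        ((9 * Real.sqrt 3 / 2 - 9 * π) * (π - Real.sqrt 3 / 2) -
          Real.sqrt 3 / 9 * (Real.sqrt 3 / 9)) := by
    ring
  rw [hE]
  exact mul_neg_of_pos_of_neg hc hB
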